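/- Let G be a homogeneous Tychonoff space, i.e. for all x, y ∈ G there is a homeomorphism h : G → G with h(x) = y, and let H be a subspace of G that is k_ℝ-dense in G, meaning that for every x ∈ G there exists a subspace M ⊆ G which is a k_ℝ-space in its subspace topology and satisfies x ∈ M and x ∈ closure(M ∩ H). If H (with the subspace topology) is a k_ℝ-space, then G is a k_ℝ-space. -/
import Mathlib


open Set Filter Topology

/-- A function `f : X → ℝ` is `k`-continuous if its restriction to every compact subset
of `X` (with the subspace topology) is continuous. -/
def KContinuous {X : Type*} [TopologicalSpace X] (f : X → ℝ) : Prop :=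
  ∀ K : Set X, IsCompact K → Continuous fun x : K => f x

/-- A topological space `X` is a `k_ℝ`-space if every `k`-continuous real-valued function
on `X` is continuous. -/
def IsKRSpace (X : Type*) [TopologicalSpace X] : Prop :=
  ∀ f : X → ℝ, KContinuous f → Continuous f

lemma KContinuous.restrict_aux {G : Type*} [TopologicalSpace G] {f : G → ℝ}
    (hf : KContinuous f) (S : Set G) : KContinuous fun x : S => f x := by
  intro K hK
  have hK' : IsCompact (Subtype.val '' K) := hK.image continuous_subtype_val
  have h1 := hf _ hK'
  have h2 : Continuous fun k : K => (⟨((k : S) : G), ⟨(k : S), k.2, rfl⟩⟩ : (Subtype.val '' K : Set G)) :=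
    Continuous.subtype_mk (continuous_subtype_val.comp continuous_subtype_val) _
  exact h1.comp h2

lemma continuousOn_of_kR {G : Type*} [TopologicalSpace G] {f : G → ℝ}
    (hf : KContinuous f) (S : Set G) (hS : IsKRSpace S) : ContinuousOn f S :=
  continuousOn_iff_continuous_restrict.mpr (hS _ (hf.restrict_aux S))

lemma continuousAt_of_mem {G : Type*} [TopologicalSpace G]
    (H : Set G)
    (hdense : ∀ x : G, ∃ M : Set G, IsKRSpace M ∧ x ∈ M ∧ x ∈ closure (M ∩ H))
    (hH : IsKRSpace H) {f : G → ℝ} (hf : KContinuous f)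
    {x₀ : G} (hx₀ : x₀ ∈ H) : ContinuousAt f x₀ := by
  have hfH : ContinuousOn f H := continuousOn_of_kR hf H hH
  rw [ContinuousAt, Metric.tendsto_nhds]
  intro ε hε
  have h2 : {z | dist (f z) (f x₀) < ε / 2} ∈ 𝓝[H] x₀ :=
    hfH x₀ hx₀ (Metric.ball_mem_nhds _ (by positivity))
  obtain ⟨U, hUo, hxU, hU⟩ := mem_nhdsWithin.mp h2
  filter_upwards [hUo.mem_nhds hxU] with y hy
  obtain ⟨M, hM, hyM, hycl⟩ := hdense y
  have hfM : ContinuousWithinAt f M y := (continuousOn_of_kR hf M hM) y hyM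
  have h4 : {z | dist (f z) (f y) < ε / 4} ∈ 𝓝[M] y :=
    hfM (Metric.ball_mem_nhds _ (by positivity))
  obtain ⟨V, hVo, hyV, hV⟩ := mem_nhdsWithin.mp h4
  obtain ⟨z, hz1, hz2⟩ := mem_closure_iff.mp hycl (U ∩ V) (hUo.inter hVo) ⟨hy, hyV⟩
  have d1 : dist (f z) (f y) < ε / 4 := hV ⟨hz1.2, hz2.1⟩
  have d2 : dist (f z) (f x₀) < ε / 2 := hU ⟨hz1.1, hz2.2⟩
  have := dist_triangle (f y) (f z) (f x₀)
  rw [dist_comm (f z) (f y)] at d1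
  linarith

theorem kR_of_kR_dense_subspace_of_homogeneous
    (G : Type*) [TopologicalSpace G] [CompletelyRegularSpace G] [T2Space G]
    (hhom : ∀ x y : G, ∃ h : G ≃ₜ G, h x = y)
    (H : Set G)
    (hdense : ∀ x : G, ∃ M : Set G, IsKRSpace M ∧ x ∈ M ∧ x ∈ closure (M ∩ H))
    (hH : IsKRSpace H) :
    IsKRSpace G := by
  intro f hf
  rw [continuous_iff_continuousAt]
  intro x
  obtain ⟨M, _, _, hxcl⟩ := hdense x
  obtain ⟨x₀, -, hx₀H⟩ := closure_nonempty_iff.mp ⟨x, hxcl⟩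
  obtain ⟨h, hh⟩ := hhom x₀ x
  have hg : KContinuous (f ∘ h) := by
    intro K hK
    have hK' : IsCompact (h '' K) := hK.image h.continuous
    have h1 := hf _ hK'
    have h2 : Continuous fun k : K => (⟨h k, mem_image_of_mem _ k.2⟩ : (h '' K : Set G)) :=
      Continuous.subtype_mk (h.continuous.comp continuous_subtype_val) _
    exact h1.comp h2
  have hca : ContinuousAt (f ∘ h) x₀ := continuousAt_of_mem H hdense hH hg hx₀H
  have : ContinuousAt f (h x₀) := by
    have hx : h.symm (h x₀) = x₀ := h.symm_apply_apply x₀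
    have := ContinuousAt.comp (hx ▸ hca) (h.symm.continuous.continuousAt (x := h x₀))
    simpa [Function.comp_def] using this
  rwa [hh] at this
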